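/- Let p ≥ 1 be an integer and U₀ ∈ ℂ^{m×ℓ} with ε := ‖E_ℓ(U₀)‖ < 1. Define U_{i+1} = U_i(I_ℓ + Ω_{i,p}) with Ω_{i,p} = s_p(E_ℓ(U_i)) for i ≥ 0. Then for all i ≥ 0, ‖Ω_{i,p}‖ ≤ (−1 + (1−ε)^{−1/2})·ε^{(p+1)^i − 1}. -/

import Mathlib

open Matrix Filter
open scoped BigOperators ComplexOrder

/-- Row-sum norm `‖A‖₁ = max_i ∑_j |A i j|`. -/
noncomputable def rowNorm {a b : ℕ} (A : Matrix (Fin a) (Fin b) ℂ) : ℝ :=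
  ⨆ i, ∑ j, ‖A i j‖

/-- The matrix norm `‖A‖ = max (‖A‖₁, ‖Aᴴ‖₁)` used throughout. -/
noncomputable def mnorm {a b : ℕ} (A : Matrix (Fin a) (Fin b) ℂ) : ℝ :=
  max (rowNorm A) (rowNorm Aᴴ)

/-- The `ℓ × q` diagonal matrix with real diagonal entries `σ`. -/
noncomputable def diagMat (l q : ℕ) (σ : Fin q → ℝ) : Matrix (Fin l) (Fin q) ℂ :=
  fun i j => if (i : ℕ) = (j : ℕ) then (σ j : ℂ) else 0

/-- `κ(Σ) = max (1, max_i 1/σ_i, max_{i≠j} (1/|σ_i−σ_j| + 1/(σ_i+σ_j)))`. -/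
noncomputable def kappa {q : ℕ} (σ : Fin q → ℝ) : ℝ :=
  max 1 (max (⨆ i, 1 / σ i)
    (⨆ i, ⨆ j, if i ≠ j then 1 / |σ i - σ j| + 1 / (σ i + σ j) else 0))

/-- `K(Σ) = max (1, max_i σ_i)`. -/
noncomputable def Kbig {q : ℕ} (σ : Fin q → ℝ) : ℝ :=
  max 1 (⨆ i, σ i)

/-- `s_p(u) = ∑_{k=1}^p (−1)^k t_k u^k`, `t_k = C(2k,k)/4^k`, the degree-`p`
truncation of the Taylor series of `−1+(1+u)^{−1/2}` at `0`. -/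
noncomputable def spReal (p : ℕ) (u : ℝ) : ℝ :=
  ∑ k ∈ Finset.Icc 1 p, (-1 : ℝ) ^ k * ((Nat.choose (2 * k) k : ℝ) / 4 ^ k) * u ^ k

/-- The matrix polynomial `s_p(A)`. -/
noncomputable def spMat {l : ℕ} (p : ℕ) (A : Matrix (Fin l) (Fin l) ℂ) :
    Matrix (Fin l) (Fin l) ℂ :=
  ∑ k ∈ Finset.Icc 1 p, ((-1 : ℂ) ^ k * ((Nat.choose (2 * k) k : ℂ) / 4 ^ k)) • A ^ k


noncomputable def tc (k : ℕ) : ℝ := (Nat.choose (2*k) k : ℝ) / 4 ^ k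

open Polynomial in
noncomputable def Pp (p : ℕ) : Polynomial ℝ :=
  ∑ k ∈ Finset.range (p+1), C ((-1:ℝ)^k * tc k) * X ^ k

open Polynomial in
noncomputable def Qq (p : ℕ) : Polynomial ℝ := (Pp p)^2 * (1 + X) - 1

open Polynomial in
noncomputable def Gg (p : ℕ) : Polynomial ℝ :=
  ∑ k ∈ Finset.range (p+1), C (tc k) * X ^ k

noncomputable def bet (p k : ℕ) : ℝ :=
  ∑ i ∈ Finset.range (k+1), if i ≤ p ∧ k - i ≤ p then tc i * tc (k-i) else 0

section NormLemmas

lemma rowNorm_nonneg {a b : ℕ} (A : Matrix (Fin a) (Fin b) ℂ) : 0 ≤ rowNorm A := by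
  apply Real.iSup_nonneg; intro i; positivity

lemma sum_abs_le_rowNorm {a b : ℕ} (A : Matrix (Fin a) (Fin b) ℂ) (i : Fin a) :
    ∑ j, ‖A i j‖ ≤ rowNorm A :=
  le_ciSup (f := fun i => ∑ j, ‖A i j‖) (Set.Finite.bddAbove (Set.finite_range _)) i

lemma rowNorm_le {a b : ℕ} {A : Matrix (Fin a) (Fin b) ℂ} {c : ℝ} (hc : 0 ≤ c)
    (h : ∀ i, ∑ j, ‖A i j‖ ≤ c) : rowNorm A ≤ c :=
  Real.iSup_le h hc

lemma mnorm_nonneg {a b : ℕ} (A : Matrix (Fin a) (Fin b) ℂ) : 0 ≤ mnorm A :=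
  le_trans (rowNorm_nonneg A) (le_max_left _ _)

lemma rowNorm_le_mnorm {a b : ℕ} (A : Matrix (Fin a) (Fin b) ℂ) : rowNorm A ≤ mnorm A :=
  le_max_left _ _

lemma rowNorm_conj_le_mnorm {a b : ℕ} (A : Matrix (Fin a) (Fin b) ℂ) : rowNorm Aᴴ ≤ mnorm A :=
  le_max_right _ _

lemma rowNorm_mul_le {a b c : ℕ} (A : Matrix (Fin a) (Fin b) ℂ) (B : Matrix (Fin b) (Fin c) ℂ) :
    rowNorm (A * B) ≤ rowNorm A * rowNorm B := by
  apply rowNorm_le (mul_nonneg (rowNorm_nonneg A) (rowNorm_nonneg B))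
  intro i
  calc ∑ j, ‖(A * B) i j‖
      ≤ ∑ j, ∑ k, ‖A i k‖ * ‖B k j‖ := by
        apply Finset.sum_le_sum; intro j _
        simp only [Matrix.mul_apply]
        refine le_trans (norm_sum_le _ _) (le_of_eq ?_)
        exact Finset.sum_congr rfl fun k _ => norm_mul _ _
    _ = ∑ k, ‖A i k‖ * ∑ j, ‖B k j‖ := by
        rw [Finset.sum_comm]; simp [Finset.mul_sum]
    _ ≤ ∑ k, ‖A i k‖ * rowNorm B := by
        apply Finset.sum_le_sum; intro k _
        exact mul_le_mul_of_nonneg_left (sum_abs_le_rowNorm B k) (by positivity)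
    _ = (∑ k, ‖A i k‖) * rowNorm B := by rw [Finset.sum_mul]
    _ ≤ rowNorm A * rowNorm B :=
        mul_le_mul_of_nonneg_right (sum_abs_le_rowNorm A i) (rowNorm_nonneg B)

lemma mnorm_mul_le {a b c : ℕ} (A : Matrix (Fin a) (Fin b) ℂ) (B : Matrix (Fin b) (Fin c) ℂ) :
    mnorm (A * B) ≤ mnorm A * mnorm B := by
  apply max_le
  · exact (rowNorm_mul_le A B).trans (mul_le_mul (rowNorm_le_mnorm A) (rowNorm_le_mnorm B)
      (rowNorm_nonneg B) (mnorm_nonneg A))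
  · rw [conjTranspose_mul]
    exact (rowNorm_mul_le Bᴴ Aᴴ).trans <| (mul_le_mul (rowNorm_conj_le_mnorm B)
      (rowNorm_conj_le_mnorm A) (rowNorm_nonneg _) (mnorm_nonneg B)).trans_eq (mul_comm _ _)

lemma rowNorm_add_le {a b : ℕ} (A B : Matrix (Fin a) (Fin b) ℂ) :
    rowNorm (A + B) ≤ rowNorm A + rowNorm B := by
  apply rowNorm_le (add_nonneg (rowNorm_nonneg A) (rowNorm_nonneg B))
  intro i
  calc ∑ j, ‖(A + B) i j‖ ≤ ∑ j, (‖A i j‖ + ‖B i j‖) := by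
        apply Finset.sum_le_sum; intro j _; simpa using norm_add_le _ _
    _ = (∑ j, ‖A i j‖) + ∑ j, ‖B i j‖ := Finset.sum_add_distrib
    _ ≤ rowNorm A + rowNorm B := add_le_add (sum_abs_le_rowNorm A i) (sum_abs_le_rowNorm B i)

lemma mnorm_add_le {a b : ℕ} (A B : Matrix (Fin a) (Fin b) ℂ) :
    mnorm (A + B) ≤ mnorm A + mnorm B := by
  apply max_le
  · exact (rowNorm_add_le A B).trans (add_le_add (rowNorm_le_mnorm A) (rowNorm_le_mnorm B))
  · rw [conjTranspose_add]
    exact (rowNorm_add_le Aᴴ Bᴴ).trans (add_le_add (rowNorm_conj_le_mnorm A) (rowNorm_conj_le_mnorm B))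

lemma rowNorm_smul {a b : ℕ} (r : ℂ) (A : Matrix (Fin a) (Fin b) ℂ) :
    rowNorm (r • A) ≤ ‖r‖ * rowNorm A := by
  apply rowNorm_le (mul_nonneg (norm_nonneg _) (rowNorm_nonneg A))
  intro i
  calc ∑ j, ‖(r • A) i j‖ = ‖r‖ * ∑ j, ‖A i j‖ := by
        simp only [Matrix.smul_apply, smul_eq_mul, norm_mul, Finset.mul_sum]
    _ ≤ ‖r‖ * rowNorm A :=
        mul_le_mul_of_nonneg_left (sum_abs_le_rowNorm A i) (by positivity)

lemma mnorm_smul_le {a b : ℕ} (r : ℂ) (A : Matrix (Fin a) (Fin b) ℂ) :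
    mnorm (r • A) ≤ ‖r‖ * mnorm A := by
  apply max_le
  · exact (rowNorm_smul r A).trans (mul_le_mul_of_nonneg_left (rowNorm_le_mnorm A) (by positivity))
  · rw [conjTranspose_smul]
    refine le_trans (rowNorm_smul _ _) ?_
    rw [RCLike.star_def, Complex.norm_conj]
    exact mul_le_mul_of_nonneg_left (rowNorm_conj_le_mnorm A) (by positivity)

lemma mnorm_real_smul_le {a b : ℕ} (r : ℝ) (A : Matrix (Fin a) (Fin b) ℂ) :
    mnorm (r • A) ≤ |r| * mnorm A := by
  have h : r • A = (r : ℂ) • A := by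
    ext i j; simp [Matrix.smul_apply, Complex.real_smul]
  rw [h]
  simpa using mnorm_smul_le (r : ℂ) A

lemma mnorm_one_le {l : ℕ} : mnorm (1 : Matrix (Fin l) (Fin l) ℂ) ≤ 1 := by
  have h : rowNorm (1 : Matrix (Fin l) (Fin l) ℂ) ≤ 1 := by
    apply rowNorm_le zero_le_one
    intro i
    simp only [Matrix.one_apply, apply_ite (fun z : ℂ => ‖z‖), norm_one, norm_zero]
    simp [Finset.sum_ite_eq]
  apply max_le h
  rw [conjTranspose_one]; exact h

lemma mnorm_pow_le {l : ℕ} (A : Matrix (Fin l) (Fin l) ℂ) (k : ℕ) :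
    mnorm (A ^ k) ≤ mnorm A ^ k := by
  induction k with
  | zero => simpa using mnorm_one_le
  | succ n ih =>
      rw [pow_succ, pow_succ]
      exact (mnorm_mul_le _ _).trans (mul_le_mul_of_nonneg_right ih (mnorm_nonneg A))

lemma mnorm_sum_le {a b : ℕ} {ι : Type*} (s : Finset ι) (f : ι → Matrix (Fin a) (Fin b) ℂ) :
    mnorm (∑ i ∈ s, f i) ≤ ∑ i ∈ s, mnorm (f i) := by
  classical
  induction s using Finset.cons_induction with
  | empty => simp [mnorm, rowNorm]
  | cons i s hi ih =>
      rw [Finset.sum_cons, Finset.sum_cons]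
      exact (mnorm_add_le _ _).trans (add_le_add le_rfl ih)

lemma mnorm_eq_zero {a b : ℕ} {A : Matrix (Fin a) (Fin b) ℂ} (h : mnorm A ≤ 0) : A = 0 := by
  ext i j
  have h1 : rowNorm A ≤ 0 := le_trans (rowNorm_le_mnorm A) h
  have h2 : ∑ j, ‖A i j‖ ≤ 0 := (sum_abs_le_rowNorm A i).trans h1
  have h3 : ‖A i j‖ ≤ 0 := by
    have := Finset.single_le_sum (f := fun j => ‖A i j‖)
      (fun j _ => by positivity) (Finset.mem_univ j)
    linarith
  simpa using le_antisymm h3 (by positivity)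

end NormLemmas

section TcLemmas

lemma tc_eq (k : ℕ) : tc k = (Nat.centralBinom k : ℝ) / 4 ^ k := by
  simp [tc, Nat.centralBinom]

lemma tc_nonneg (k : ℕ) : 0 ≤ tc k := by unfold tc; positivity

lemma tc_zero : tc 0 = 1 := by simp [tc]

lemma tc_succ (k : ℕ) : ((k : ℝ) + 1) * tc (k+1) = ((k : ℝ) + 1/2) * tc k := by
  have h := Nat.succ_mul_centralBinom_succ k
  have h' : ((k+1 : ℕ) * Nat.centralBinom (k+1) : ℝ) = ((2 * (2*k+1) * Nat.centralBinom k : ℕ) : ℝ) := by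
    exact_mod_cast congrArg (Nat.cast : ℕ → ℝ) h
  push_cast at h'
  rw [tc_eq, tc_eq]
  have h4 : (4:ℝ)^(k+1) = 4 * 4^k := by ring
  field_simp [h4]
  linear_combination (2*(4:ℝ)^k) * h'

lemma tc_succ_le (k : ℕ) : tc (k+1) ≤ tc k := by
  have h := tc_succ k
  have hk : (0:ℝ) < (k:ℝ) + 1 := by positivity
  have ht := tc_nonneg k
  nlinarith

lemma tc_antitone : ∀ {i j : ℕ}, i ≤ j → tc j ≤ tc i := by
  intro i j h
  induction j with
  | zero => simp_all
  | succ n ih =>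
    rcases Nat.lt_or_ge i (n+1) with h'|h'
    · exact (tc_succ_le n).trans (ih (Nat.lt_succ_iff.mp h'))
    · have : i = n + 1 := le_antisymm h h'
      simp [this]

-- symmetry helper
lemma conv_sym (k : ℕ) :
    2 * (∑ i ∈ Finset.range (k+1), (i:ℝ) * (tc i * tc (k - i)))
      = (k:ℝ) * ∑ i ∈ Finset.range (k+1), tc i * tc (k - i) := by
  have hrefl : ∑ i ∈ Finset.range (k+1), (i:ℝ) * (tc i * tc (k - i))
      = ∑ i ∈ Finset.range (k+1), ((k - i : ℕ):ℝ) * (tc (k-i) * tc (k - (k-i))) := by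
    rw [← Finset.sum_range_reflect]
    apply Finset.sum_congr rfl
    intro i hi
    simp only [Finset.mem_range, Nat.lt_succ_iff] at hi
    congr 2 <;> omega
  nth_rewrite 1 [two_mul]
  nth_rewrite 2 [hrefl]
  rw [← Finset.sum_add_distrib, Finset.mul_sum]
  apply Finset.sum_congr rfl
  intro i hi
  simp only [Finset.mem_range, Nat.lt_succ_iff] at hi
  have h1 : k - (k - i) = i := by omega
  have h2 : ((k - i : ℕ):ℝ) = (k:ℝ) - i := Nat.cast_sub hi
  rw [h1, h2]
  ring

lemma conv_tc : ∀ k : ℕ, ∑ i ∈ Finset.range (k+1), tc i * tc (k - i) = 1 := by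
  intro k
  induction k with
  | zero => simp [tc_zero]
  | succ k ih =>
    have hk1 : (0:ℝ) < (k:ℝ) + 1 := by positivity
    have key : ((k:ℝ)+1) * ∑ i ∈ Finset.range (k+2), tc i * tc (k+1-i)
        = ((k:ℝ)+1) * ∑ i ∈ Finset.range (k+1), tc i * tc (k-i) := by
      have h1 : ((k:ℝ)+1) * ∑ i ∈ Finset.range (k+2), tc i * tc (k+1-i)
          = 2 * ∑ i ∈ Finset.range (k+2), (i:ℝ) * (tc i * tc (k+1-i)) := by
        rw [conv_sym (k+1)]; push_cast; ring
      have h2 : ∑ i ∈ Finset.range (k+2), (i:ℝ) * (tc i * tc (k+1-i))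
          = ∑ i ∈ Finset.range (k+1), ((i:ℝ)+1) * (tc (i+1) * tc (k-i)) := by
        rw [Finset.sum_range_succ' (fun i => (i:ℝ) * (tc i * tc (k+1-i))) (k+1)]
        simp only [Nat.cast_zero, zero_mul, add_zero]
        apply Finset.sum_congr rfl
        intro i hi
        simp only [Finset.mem_range] at hi
        have : k + 1 - (i+1) = k - i := by omega
        rw [this]; push_cast; ring
      have h3 : ∑ i ∈ Finset.range (k+1), ((i:ℝ)+1) * (tc (i+1) * tc (k-i))
          = ∑ i ∈ Finset.range (k+1), ((i:ℝ)+1/2) * (tc i * tc (k-i)) := by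
        apply Finset.sum_congr rfl
        intro i _
        rw [← mul_assoc, tc_succ i, mul_assoc]
      have h4 : 2 * ∑ i ∈ Finset.range (k+1), ((i:ℝ)+1/2) * (tc i * tc (k-i))
          = 2 * ∑ i ∈ Finset.range (k+1), (i:ℝ) * (tc i * tc (k-i))
            + ∑ i ∈ Finset.range (k+1), tc i * tc (k-i) := by
        rw [Finset.mul_sum, Finset.mul_sum, ← Finset.sum_add_distrib]
        apply Finset.sum_congr rfl
        intro i _; ring
      rw [h1, h2, h3, h4, conv_sym k]
      ring
    have := mul_left_cancel₀ (ne_of_gt hk1) key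
    rw [this, ih]

end TcLemmas

section PolyLemmas
open Polynomial



lemma coeff_Pp (p k : ℕ) : (Pp p).coeff k = if k ≤ p then (-1:ℝ)^k * tc k else 0 := by
  rw [Pp, Polynomial.finset_sum_coeff]
  simp only [Polynomial.coeff_C_mul, Polynomial.coeff_X_pow]
  rw [Finset.sum_congr rfl (fun j _ => by rw [mul_ite, mul_one, mul_zero])]
  rw [Finset.sum_congr rfl (fun j _ => by
    rw [show ((if k = j then (-1:ℝ)^j * tc j else 0))
        = (if j = k then (-1:ℝ)^j * tc j else 0) by simp [eq_comm]])]
  rw [Finset.sum_ite_eq' (Finset.range (p+1)) k (fun j => (-1:ℝ)^j * tc j)]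
  simp [Nat.lt_succ_iff]

lemma coeff_Pp_sq (p k : ℕ) : ((Pp p)^2).coeff k = (-1:ℝ)^k * bet p k := by
  rw [sq, Polynomial.coeff_mul, Finset.Nat.sum_antidiagonal_eq_sum_range_succ_mk]
  rw [bet, Finset.mul_sum]
  apply Finset.sum_congr rfl
  intro i hi
  simp only [Finset.mem_range, Nat.lt_succ_iff] at hi
  rw [coeff_Pp, coeff_Pp]
  by_cases h1 : i ≤ p <;> by_cases h2 : k - i ≤ p <;> simp [h1, h2]
  have hpow : (-1:ℝ)^i * ((-1:ℝ)^(k-i)) = (-1:ℝ)^k := by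
    rw [← pow_add]; congr 1; omega
  calc (-1:ℝ)^i * tc i * ((-1:ℝ)^(k-i) * tc (k-i))
      = ((-1:ℝ)^i * (-1:ℝ)^(k-i)) * (tc i * tc (k-i)) := by ring
    _ = (-1:ℝ)^k * (tc i * tc (k-i)) := by rw [hpow]

lemma bet_nonneg (p k : ℕ) : 0 ≤ bet p k := by
  apply Finset.sum_nonneg
  intro i _
  split
  · exact mul_nonneg (tc_nonneg _) (tc_nonneg _)
  · exact le_refl 0

lemma bet_le_one (p k : ℕ) : bet p k ≤ 1 := by
  rw [← conv_tc k, bet]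
  apply Finset.sum_le_sum
  intro i _
  split
  · exact le_refl _
  · exact mul_nonneg (tc_nonneg _) (tc_nonneg _)

lemma bet_eq_one {p k : ℕ} (h : k ≤ p) : bet p k = 1 := by
  rw [← conv_tc k, bet]
  apply Finset.sum_congr rfl
  intro i hi
  simp only [Finset.mem_range, Nat.lt_succ_iff] at hi
  have : i ≤ p ∧ k - i ≤ p := ⟨le_trans hi h, le_trans (Nat.sub_le _ _) h⟩
  simp [this]

lemma bet_succ_le {p k : ℕ} (h : p ≤ k) : bet p (k+1) ≤ bet p k := by
  rw [bet, bet, Finset.sum_range_succ]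
  have hlast : (if k+1 ≤ p ∧ k+1-(k+1) ≤ p then tc (k+1) * tc (k+1-(k+1)) else 0) = 0 := by
    have : ¬ (k+1 ≤ p ∧ k+1-(k+1) ≤ p) := by omega
    rw [if_neg this]
  rw [hlast, add_zero]
  apply Finset.sum_le_sum
  intro i hi
  simp only [Finset.mem_range, Nat.lt_succ_iff] at hi
  split_ifs with h1 h2 h3
  · have he : k + 1 - i = (k - i) + 1 := by omega
    rw [he]
    exact mul_le_mul_of_nonneg_left (tc_succ_le _) (tc_nonneg _)
  · exact absurd ⟨h1.1, by omega⟩ h2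
  · exact mul_nonneg (tc_nonneg _) (tc_nonneg _)
  · exact le_refl 0

lemma coeff_Qq_succ (p n : ℕ) : (Qq p).coeff (n+1) = (-1:ℝ)^n * (bet p n - bet p (n+1)) := by
  rw [Qq, mul_one_add]
  rw [Polynomial.coeff_sub, Polynomial.coeff_add, Polynomial.coeff_mul_X]
  rw [Polynomial.coeff_one]
  simp only [Nat.succ_ne_zero, if_false, sub_zero]
  rw [coeff_Pp_sq, coeff_Pp_sq, pow_succ]
  ring

lemma coeff_Qq_zero (p : ℕ) : (Qq p).coeff 0 = 0 := by
  rw [Qq, mul_one_add]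
  rw [Polynomial.coeff_sub, Polynomial.coeff_add, Polynomial.coeff_mul_X_zero]
  rw [Polynomial.coeff_one, coeff_Pp_sq]
  simp [bet_eq_one (Nat.zero_le p)]

lemma natDegree_Pp_le (p : ℕ) : (Pp p).natDegree ≤ p := by
  rw [Pp]
  apply Polynomial.natDegree_sum_le_of_forall_le
  intro i hi
  simp only [Finset.mem_range, Nat.lt_succ_iff] at hi
  exact le_trans (Polynomial.natDegree_C_mul_le _ _) (by simpa using hi)

lemma natDegree_Qq_lt (p : ℕ) : (Qq p).natDegree < 2*p + 3 := by
  rw [Qq]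
  have h1 : ((Pp p)^2).natDegree ≤ 2 * p :=
    le_trans Polynomial.natDegree_pow_le (by have := natDegree_Pp_le p; omega)
  have h2 : ((1 + X : Polynomial ℝ)).natDegree ≤ 1 :=
    le_trans (Polynomial.natDegree_add_le _ _) (by simp)
  have h3 : ((Pp p)^2 * (1+X)).natDegree ≤ 2*p + 1 :=
    le_trans (Polynomial.natDegree_mul_le) (by omega)
  have := Polynomial.natDegree_sub_le ((Pp p)^2 * (1+X)) 1
  simp only [Polynomial.natDegree_one] at this
  omega

lemma sum_coeff_Qq_le (p : ℕ) {u : ℝ} (hu0 : 0 ≤ u) (hu1 : u ≤ 1) :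
    ∑ k ∈ Finset.range (2*p+3), |(Qq p).coeff k| * u^k ≤ u^(p+1) := by
  have hsplit : Finset.range (2*p+3) = Finset.range (p+1) ∪ Finset.Ico (p+1) (2*p+3) := by
    rw [Finset.range_eq_Ico, Finset.range_eq_Ico]
    exact (Finset.Ico_union_Ico_eq_Ico (b := p+1) (c := 2*p+3) (Nat.zero_le _) (by omega)).symm
  rw [hsplit, Finset.sum_union (by
    apply Finset.disjoint_left.mpr
    intro x hx hx'
    simp only [Finset.mem_range, Finset.mem_Ico] at hx hx'
    omega)]
  have hfirst : ∑ k ∈ Finset.range (p+1), |(Qq p).coeff k| * u^k = 0 := by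
    apply Finset.sum_eq_zero
    intro k hk
    simp only [Finset.mem_range, Nat.lt_succ_iff] at hk
    rcases k with _|n
    · simp [coeff_Qq_zero]
    · rw [coeff_Qq_succ]
      rw [bet_eq_one (by omega : n ≤ p), bet_eq_one (by omega : n+1 ≤ p)]
      simp
  rw [hfirst, zero_add, Finset.sum_Ico_eq_sum_range]
  have hlen : 2*p+3 - (p+1) = p+2 := by omega
  rw [hlen]
  have hterm : ∀ j ∈ Finset.range (p+2),
      |(Qq p).coeff (p+1+j)| * u^(p+1+j)
        ≤ (bet p (p+j) - bet p (p+(j+1))) * u^(p+1) := by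
    intro j _
    have he : p + 1 + j = (p+j) + 1 := by omega
    have he2 : p + (j+1) = (p+j) + 1 := by omega
    rw [he, he2, coeff_Qq_succ]
    have hmono : bet p (p+j+1) ≤ bet p (p+j) := bet_succ_le (by omega)
    rw [abs_mul, abs_pow, abs_neg, abs_one, one_pow, one_mul,
      abs_of_nonneg (by linarith : (0:ℝ) ≤ bet p (p+j) - bet p (p+j+1))]
    exact mul_le_mul_of_nonneg_left (pow_le_pow_of_le_one hu0 hu1 (by omega)) (by linarith)
  calc ∑ j ∈ Finset.range (p+2), |(Qq p).coeff (p+1+j)| * u^(p+1+j)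
      ≤ ∑ j ∈ Finset.range (p+2), (bet p (p+j) - bet p (p+(j+1))) * u^(p+1) :=
        Finset.sum_le_sum hterm
    _ = (∑ j ∈ Finset.range (p+2), (bet p (p+j) - bet p (p+(j+1)))) * u^(p+1) :=
        (Finset.sum_mul _ _ _).symm
    _ ≤ u^(p+1) := by
        rw [Finset.sum_range_sub' (fun j => bet p (p+j)) (p+2)]
        have h0 : bet p (p+0) = 1 := bet_eq_one (by omega)
        have h2 : 0 ≤ bet p (p+(p+2)) := bet_nonneg _ _
        nlinarith [pow_nonneg hu0 (p+1)]
lemma range_succ_split (p : ℕ) : Finset.range (p+1) = insert 0 (Finset.Icc 1 p) := by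
  ext x; simp [Nat.lt_succ_iff]; omega


lemma coeff_Gg (p k : ℕ) : (Gg p).coeff k = if k ≤ p then tc k else 0 := by
  rw [Gg, Polynomial.finset_sum_coeff]
  simp only [Polynomial.coeff_C_mul, Polynomial.coeff_X_pow]
  rw [Finset.sum_congr rfl (fun j _ => by rw [mul_ite, mul_one, mul_zero])]
  rw [Finset.sum_congr rfl (fun j _ => by
    rw [show ((if k = j then tc j else 0)) = (if j = k then tc j else 0) by simp [eq_comm]])]
  rw [Finset.sum_ite_eq' (Finset.range (p+1)) k tc]
  simp [Nat.lt_succ_iff]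

lemma coeff_Gg_sq (p k : ℕ) : ((Gg p)^2).coeff k = bet p k := by
  rw [sq, Polynomial.coeff_mul, Finset.Nat.sum_antidiagonal_eq_sum_range_succ_mk, bet]
  apply Finset.sum_congr rfl
  intro i hi
  simp only [Finset.mem_range, Nat.lt_succ_iff] at hi
  rw [coeff_Gg, coeff_Gg]
  by_cases h1 : i ≤ p <;> by_cases h2 : k - i ≤ p <;> simp [h1, h2]

lemma natDegree_Gg_sq_lt (p : ℕ) : ((Gg p)^2).natDegree < 2*p+1 := by
  have h : (Gg p).natDegree ≤ p := by
    rw [Gg]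
    apply Polynomial.natDegree_sum_le_of_forall_le
    intro i hi
    simp only [Finset.mem_range, Nat.lt_succ_iff] at hi
    exact le_trans (Polynomial.natDegree_C_mul_le _ _) (by simpa using hi)
  have := Polynomial.natDegree_pow_le (p := Gg p) (n := 2)
  omega

lemma eval_Gg (p : ℕ) (u : ℝ) :
    (Gg p).eval u = 1 + ∑ k ∈ Finset.Icc 1 p, tc k * u ^ k := by
  rw [Gg, Polynomial.eval_finset_sum]
  simp only [Polynomial.eval_mul, Polynomial.eval_C, Polynomial.eval_pow, Polynomial.eval_X]
  rw [range_succ_split, Finset.sum_insert (by simp)]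
  simp [tc_zero]

lemma one_add_sum_sq_le (p : ℕ) {u : ℝ} (hu0 : 0 ≤ u) (hu1 : u < 1) :
    (1 + ∑ k ∈ Finset.Icc 1 p, tc k * u ^ k)^2 ≤ (1 - u)⁻¹ := by
  rw [← eval_Gg, ← Polynomial.eval_pow]
  rw [Polynomial.eval_eq_sum_range' (natDegree_Gg_sq_lt p) u]
  calc ∑ k ∈ Finset.range (2*p+1), ((Gg p)^2).coeff k * u^k
      ≤ ∑ k ∈ Finset.range (2*p+1), u^k := by
        apply Finset.sum_le_sum
        intro k _
        rw [coeff_Gg_sq]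
        have := bet_le_one p k
        have := pow_nonneg hu0 k
        nlinarith [bet_nonneg p k]
    _ ≤ (1 - u)⁻¹ := by
        rw [geom_sum_eq (ne_of_lt hu1) (2*p+1)]
        rw [div_eq_mul_inv]
        have h1 : (0:ℝ) < 1 - u := by linarith
        have h2 : u^(2*p+1) - 1 ≤ 0 := by
          have := pow_le_one₀ hu0 (le_of_lt hu1) (n := 2*p+1)
          linarith
        have h3 : (u - 1)⁻¹ ≤ 0 := by
          apply inv_nonpos.mpr; linarith
        have h4 : (u^(2*p+1) - 1) * (u-1)⁻¹ = (1 - u^(2*p+1)) * (1-u)⁻¹ := by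
          rw [show u - 1 = -(1-u) by ring, inv_neg]; ring
        rw [h4]
        have h5 : (1 - u^(2*p+1)) * (1-u)⁻¹ ≤ 1 * (1-u)⁻¹ := by
          apply mul_le_mul_of_nonneg_right _ (le_of_lt (inv_pos.mpr h1))
          nlinarith [pow_nonneg hu0 (2*p+1)]
        linarith

lemma sum_tc_le_rpow (p : ℕ) {u : ℝ} (hu0 : 0 ≤ u) (hu1 : u < 1) :
    ∑ k ∈ Finset.Icc 1 p, tc k * u ^ k ≤ -1 + (1 - u) ^ (-(1/2 : ℝ)) := by
  set S := ∑ k ∈ Finset.Icc 1 p, tc k * u ^ k with hS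
  have hS0 : 0 ≤ S := Finset.sum_nonneg fun k _ => mul_nonneg (tc_nonneg k) (pow_nonneg hu0 k)
  have h1u : (0:ℝ) < 1 - u := by linarith
  have key : (1 + S) ≤ Real.sqrt ((1-u)⁻¹) := by
    rw [Real.le_sqrt (by linarith) (by positivity)]
    exact one_add_sum_sq_le p hu0 hu1
  have hr : (1 - u) ^ (-(1/2 : ℝ)) = Real.sqrt ((1-u)⁻¹) := by
    rw [Real.rpow_neg (le_of_lt h1u), ← Real.sqrt_eq_rpow, ← Real.sqrt_inv]
  rw [hr]
  linarith

end PolyLemmas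

section MatrixLemmas
open Polynomial

lemma real_smul_mat {a b : ℕ} (r : ℝ) (M : Matrix (Fin a) (Fin b) ℂ) :
    ((r:ℂ)) • M = r • M := by
  ext i j; simp [Matrix.smul_apply, Complex.real_smul]

lemma spMat_coeff_real (k : ℕ) :
    ((-1 : ℂ)^k * ((Nat.choose (2*k) k : ℂ) / 4^k)) = (((-1:ℝ)^k * tc k : ℝ) : ℂ) := by
  push_cast [tc]; ring

lemma aeval_Pp {l : ℕ} (p : ℕ) (A : Matrix (Fin l) (Fin l) ℂ) :
    Polynomial.aeval A (Pp p) = 1 + spMat p A := by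
  rw [Pp, map_sum, range_succ_split, Finset.sum_insert (by simp)]
  have h0 : Polynomial.aeval A (C ((-1:ℝ)^0 * tc 0) * X ^ 0) = 1 := by
    simp [tc_zero]
  rw [h0]
  congr 1
  rw [spMat]
  apply Finset.sum_congr rfl
  intro k _
  rw [_root_.map_mul, Polynomial.aeval_C, map_pow, Polynomial.aeval_X,
    spMat_coeff_real, real_smul_mat, Algebra.smul_def]

lemma spMat_herm {l : ℕ} (p : ℕ) {A : Matrix (Fin l) (Fin l) ℂ} (hA : Aᴴ = A) :
    (spMat p A)ᴴ = spMat p A := by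
  rw [spMat, conjTranspose_sum]
  apply Finset.sum_congr rfl
  intro k _
  rw [conjTranspose_smul, conjTranspose_pow, hA, spMat_coeff_real]
  congr 1
  exact Complex.conj_ofReal _

lemma Estep {m l : ℕ} (p : ℕ) (Uc Un : Matrix (Fin m) (Fin l) ℂ)
    (h : Un = Uc * (1 + spMat p (Ucᴴ * Uc - 1))) :
    Unᴴ * Un - 1 = Polynomial.aeval (Ucᴴ * Uc - 1) (Qq p) := by
  set E := Ucᴴ * Uc - 1 with hE
  have hEh : Eᴴ = E := by
    rw [hE, conjTranspose_sub, conjTranspose_mul, conjTranspose_conjTranspose,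
      conjTranspose_one]
  have hB : (1 + spMat p E)ᴴ = 1 + spMat p E := by
    rw [conjTranspose_add, conjTranspose_one, spMat_herm p hEh]
  have hUU : Ucᴴ * Uc = 1 + E := by rw [hE]; abel
  have h2 : Unᴴ * Un = (1 + spMat p E) * ((1 + E) * (1 + spMat p E)) := by
    rw [h, conjTranspose_mul, hB, Matrix.mul_assoc, ← Matrix.mul_assoc Ucᴴ, hUU]
  have h3 : Polynomial.aeval E ((1 : Polynomial ℝ) + X) = 1 + E := by
    simp
  rw [h2, ← aeval_Pp, ← h3, ← _root_.map_mul, ← _root_.map_mul]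
  have h4 : Pp p * ((1 + X) * Pp p) = Qq p + 1 := by rw [Qq]; ring
  rw [h4, map_add, _root_.map_one, add_sub_cancel_right]

lemma mnorm_aeval_le {l : ℕ} (f : Polynomial ℝ) {n : ℕ} (hn : f.natDegree < n)
    (M : Matrix (Fin l) (Fin l) ℂ) :
    mnorm (Polynomial.aeval M f) ≤ ∑ k ∈ Finset.range n, |f.coeff k| * (mnorm M)^k := by
  rw [Polynomial.aeval_eq_sum_range' hn]
  refine le_trans (mnorm_sum_le _ _) (Finset.sum_le_sum ?_)
  intro k _
  refine le_trans (mnorm_real_smul_le _ _) ?_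
  exact mul_le_mul_of_nonneg_left (mnorm_pow_le M k) (abs_nonneg _)

lemma mnorm_spMat_le {l : ℕ} (p : ℕ) (A : Matrix (Fin l) (Fin l) ℂ) :
    mnorm (spMat p A) ≤ ∑ k ∈ Finset.Icc 1 p, tc k * (mnorm A)^k := by
  rw [spMat]
  refine le_trans (mnorm_sum_le _ _) (Finset.sum_le_sum ?_)
  intro k _
  rw [spMat_coeff_real, real_smul_mat]
  refine le_trans (mnorm_real_smul_le _ _) ?_
  have habs : |(-1:ℝ)^k * tc k| = tc k := by
    rw [abs_mul, abs_pow, abs_neg, abs_one, one_pow, one_mul, abs_of_nonneg (tc_nonneg k)]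
  rw [habs]
  exact mul_le_mul_of_nonneg_left (mnorm_pow_le A k) (tc_nonneg k)

/-- Lemma 3.8: bound on `‖Ω_{i,p}‖` along the iteration. -/
theorem omega_bound_along_iteration {m l : ℕ} (p : ℕ) (hp : 1 ≤ p)
    (U : ℕ → Matrix (Fin m) (Fin l) ℂ) (ε : ℝ)
    (hε : ε = mnorm ((U 0)ᴴ * U 0 - 1)) (hε1 : ε < 1)
    (hrec : ∀ i, U (i + 1) = U i * (1 + spMat p ((U i)ᴴ * U i - 1))) :
    ∀ i, mnorm (spMat p ((U i)ᴴ * U i - 1)) ≤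
      (-1 + (1 - ε) ^ (-(1 / 2 : ℝ))) * ε ^ ((p + 1) ^ i - 1) := by
  have hε0 : 0 ≤ ε := hε ▸ mnorm_nonneg _
  have hεle1 : ε ≤ 1 := le_of_lt hε1
  -- the εs bound along the iteration
  have hEi : ∀ i, mnorm ((U i)ᴴ * U i - 1) ≤ ε ^ ((p+1)^i) := by
    intro i
    induction i with
    | zero => simp [hε]
    | succ i ih =>
      have hu0 : 0 ≤ mnorm ((U i)ᴴ * U i - 1) := mnorm_nonneg _
      have hu1 : mnorm ((U i)ᴴ * U i - 1) ≤ 1 :=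
        le_trans ih (pow_le_one₀ hε0 hεle1)
      calc mnorm ((U (i+1))ᴴ * U (i+1) - 1)
          = mnorm (Polynomial.aeval ((U i)ᴴ * U i - 1) (Qq p)) := by
            rw [Estep p (U i) (U (i+1)) (hrec i)]
        _ ≤ ∑ k ∈ Finset.range (2*p+3), |(Qq p).coeff k| * (mnorm ((U i)ᴴ * U i - 1))^k :=
            mnorm_aeval_le (Qq p) (natDegree_Qq_lt p) _
        _ ≤ (mnorm ((U i)ᴴ * U i - 1))^(p+1) := sum_coeff_Qq_le p hu0 hu1
        _ ≤ (ε ^ ((p+1)^i))^(p+1) := pow_le_pow_left₀ hu0 ih (p+1)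
        _ = ε ^ ((p+1)^(i+1)) := by rw [← pow_mul, ← pow_succ]
  intro i
  set es := mnorm ((U i)ᴴ * U i - 1) with hes
  have hes0 : 0 ≤ es := mnorm_nonneg _
  have hesi : es ≤ ε ^ ((p+1)^i) := hEi i
  have hone : 1 ≤ (p+1)^i := Nat.one_le_pow _ _ (by omega)
  have hesε : es ≤ ε := by
    refine hesi.trans ?_
    calc ε ^ ((p+1)^i) ≤ ε ^ 1 := pow_le_pow_of_le_one hε0 hεle1 hone
      _ = ε := pow_one ε
  have hexp : ε ^ ((p+1)^i) = ε ^ ((p+1)^i - 1) * ε := by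
    rw [← pow_succ]
    congr 1
    omega
  calc mnorm (spMat p ((U i)ᴴ * U i - 1))
      ≤ ∑ k ∈ Finset.Icc 1 p, tc k * es^k := mnorm_spMat_le p _
    _ ≤ ∑ k ∈ Finset.Icc 1 p, tc k * (ε^(k-1) * es) := by
        apply Finset.sum_le_sum
        intro k hk
        simp only [Finset.mem_Icc] at hk
        have hk1 : k = (k-1) + 1 := by omega
        apply mul_le_mul_of_nonneg_left _ (tc_nonneg k)
        calc es ^ k = es^(k-1) * es := by conv_lhs => rw [hk1, pow_succ]
          _ ≤ ε^(k-1) * es := mul_le_mul_of_nonneg_right (pow_le_pow_left₀ hes0 hesε _) hes0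
    _ = (∑ k ∈ Finset.Icc 1 p, tc k * ε^(k-1)) * es := by
        rw [Finset.sum_mul]; apply Finset.sum_congr rfl; intro k _; ring
    _ ≤ (∑ k ∈ Finset.Icc 1 p, tc k * ε^(k-1)) * (ε ^ ((p+1)^i - 1) * ε) := by
        apply mul_le_mul_of_nonneg_left (hexp ▸ hesi)
        exact Finset.sum_nonneg fun k _ => mul_nonneg (tc_nonneg k) (pow_nonneg hε0 _)
    _ = (∑ k ∈ Finset.Icc 1 p, tc k * ε^k) * ε ^ ((p+1)^i - 1) := by
        rw [Finset.sum_mul, Finset.sum_mul]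
        apply Finset.sum_congr rfl
        intro k hk
        simp only [Finset.mem_Icc] at hk
        have hk1 : k = (k-1) + 1 := by omega
        calc tc k * ε^(k-1) * (ε ^ ((p+1)^i - 1) * ε)
            = tc k * (ε^(k-1) * ε) * ε ^ ((p+1)^i - 1) := by ring
          _ = tc k * ε^k * ε ^ ((p+1)^i - 1) := by rw [← pow_succ, ← hk1]
    _ ≤ (-1 + (1 - ε) ^ (-(1/2 : ℝ))) * ε ^ ((p+1)^i - 1) := by
        apply mul_le_mul_of_nonneg_right (sum_tc_le_rpow p hε0 hε1)
        exact pow_nonneg hε0 _
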